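/- arXiv:2106.01799 — 2 statements merged into one kernel-verified Lean document; each statement's English description precedes it below -/
import Mathlib

section
/- For every real exponent p ≥ 1 and all nonnegative reals x, y, one has (x^p − y^p)(x − y) ≥ |x − y|^{p+1}. -/
lemma aux_rpow_sub (p x y : ℝ) (hp : 1 ≤ p) (hy : 0 ≤ y) (hxy : y ≤ x) :
    (x - y) ^ p ≤ x ^ p - y ^ p := by
  have h := NNReal.add_rpow_le_rpow_add ⟨x - y, sub_nonneg.2 hxy⟩ ⟨y, hy⟩ hp
  have h' : ((x - y) ^ p + y ^ p : ℝ) ≤ x ^ p := by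
    have := (NNReal.coe_le_coe).2 h
    have this : (x - y) ^ p + y ^ p ≤ ((x - y) + y) ^ p := this
    simpa [NNReal.coe_rpow, sub_add_cancel] using this
  linarith

theorem pow_diff_mul_diff_ge_abs_pow (p x y : ℝ) (hp : 1 ≤ p)
    (hx : 0 ≤ x) (hy : 0 ≤ y) :
    (x ^ p - y ^ p) * (x - y) ≥ |x - y| ^ (p + 1) := by
  rcases eq_or_ne x y with rfl | hne
  · simp [Real.zero_rpow (by linarith : p + 1 ≠ 0)]
  rcases le_total y x with h | h
  · have hd : (0:ℝ) < x - y := sub_pos.2 (lt_of_le_of_ne h (Ne.symm hne))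
    rw [abs_of_pos hd, Real.rpow_add_one hd.ne']
    have := aux_rpow_sub p x y hp hy h
    nlinarith [Real.rpow_nonneg hd.le p]
  · have hd : (0:ℝ) < y - x := sub_pos.2 (lt_of_le_of_ne h hne)
    have habs : |x - y| = y - x := by rw [abs_sub_comm, abs_of_pos hd]
    rw [habs, Real.rpow_add_one hd.ne']
    have := aux_rpow_sub p y x hp hx h
    nlinarith [Real.rpow_nonneg hd.le p]
end

section
/- Let F : [0,∞) → [0,∞) be continuous with ∫₀^∞ F(τ) dτ < ∞, and suppose there is a constant C ≥ 0 such that F(t) ≤ F(s) + C·∫ₛᵗ F(τ) dτ for all 0 ≤ s ≤ t. Then F(t) → 0 as t → ∞. -/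
open MeasureTheory Filter

theorem tendsto_zero_of_integral_inequality (F : ℝ → ℝ) (C : ℝ) (hC : 0 ≤ C)
    (hcont : ContinuousOn F (Set.Ici 0))
    (hnonneg : ∀ t ∈ Set.Ici (0 : ℝ), 0 ≤ F t)
    (hint : IntegrableOn F (Set.Ici 0))
    (hineq : ∀ s t : ℝ, 0 ≤ s → s ≤ t → F t ≤ F s + C * ∫ τ in s..t, F τ) :
    Tendsto F atTop (nhds 0) := by
  have hIoi : IntegrableOn F (Set.Ioi 0) := hint.mono_set Set.Ioi_subset_Ici_self
  set A := ∫ x in Set.Ioi (0:ℝ), F x with hA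
  have htend : Tendsto (fun T => ∫ x in (0:ℝ)..T, F x) atTop (nhds A) :=
    intervalIntegral_tendsto_integral_Ioi 0 hIoi tendsto_id
  rw [NormedAddCommGroup.tendsto_nhds_zero]
  intro ε hε
  set δ := ε / (2 * (C + 1)) with hδdef
  have hδ : 0 < δ := by positivity
  -- find T ≥ 0 with tail integral < δ
  have h1 : ∀ᶠ T in atTop, dist (∫ x in (0:ℝ)..T, F x) A < δ :=
    (Metric.tendsto_nhds.1 htend) δ hδ
  obtain ⟨T, hT⟩ := ((h1.and (eventually_ge_atTop (0:ℝ))).exists)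
  obtain ⟨hTdist, hT0⟩ := hT
  have hIoiT : IntegrableOn F (Set.Ioi T) :=
    hint.mono_set (fun x hx => le_trans hT0 (le_of_lt hx))
  have hsplit : A = (∫ x in (0:ℝ)..T, F x) + ∫ x in Set.Ioi T, F x := by
    rw [intervalIntegral.integral_of_le hT0, hA,
      ← Set.Ioc_union_Ioi_eq_Ioi hT0,
      setIntegral_union (Set.Ioc_disjoint_Ioi le_rfl) measurableSet_Ioi
        (hIoi.mono_set (by rw [← Set.Ioc_union_Ioi_eq_Ioi hT0]; exact Set.subset_union_left))
        hIoiT]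
  have htail : (∫ x in Set.Ioi T, F x) < δ := by
    have := hTdist
    rw [Real.dist_eq, abs_lt] at this
    linarith [this.1, this.2, hsplit]
  -- find s ≥ T with F s < ε/2
  have hex : ∃ s, T ≤ s ∧ F s < ε / 2 := by
    by_contra h
    push_neg at h
    have hsub : Set.Ioi T ⊆ { x | ε / 2 ≤ ‖F x‖ } := by
      intro x hx
      have hx' : ε / 2 ≤ F x := h x (le_of_lt hx)
      have : 0 ≤ F x := le_trans (by positivity) hx'
      simpa [Real.norm_eq_abs, abs_of_nonneg this] using hx'
    have hfin := hIoiT.measure_norm_ge_lt_top (by positivity : (0:ℝ) < ε / 2)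
    have hge : (⊤ : ENNReal) ≤ (volume.restrict (Set.Ioi T)) { x | ε / 2 ≤ ‖F x‖ } := by
      calc (⊤ : ENNReal) = volume (Set.Ioi T) := Real.volume_Ioi.symm
        _ = (volume.restrict (Set.Ioi T)) (Set.Ioi T) := (Measure.restrict_apply_self _ _).symm
        _ ≤ _ := measure_mono hsub
    exact absurd hfin (not_lt.2 hge)
  obtain ⟨s, hTs, hFs⟩ := hex
  have hs0 : 0 ≤ s := le_trans hT0 hTs
  filter_upwards [eventually_ge_atTop s] with t hst
  have ht0 : 0 ≤ t := le_trans hs0 hst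
  have hFt : 0 ≤ F t := hnonneg t ht0
  rw [Real.norm_eq_abs, abs_of_nonneg hFt]
  have hIbound : (∫ τ in s..t, F τ) ≤ ∫ x in Set.Ioi T, F x := by
    rw [intervalIntegral.integral_of_le hst]
    refine setIntegral_mono_set hIoiT ?_ ?_
    · filter_upwards [ae_restrict_mem measurableSet_Ioi] with x hx
      exact hnonneg x (le_trans hT0 (le_of_lt hx))
    · exact Filter.Eventually.of_forall fun x hx => lt_of_le_of_lt hTs hx.1
  have h2 := hineq s t hs0 hst
  have hCδ : C * δ < ε / 2 := by
    rw [hδdef, mul_comm, div_mul_eq_mul_div,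
      div_lt_div_iff₀ (by positivity) (by norm_num : (0:ℝ) < 2)]
    nlinarith
  have : C * (∫ τ in s..t, F τ) ≤ C * δ :=
    mul_le_mul_of_nonneg_left (le_trans hIbound (le_of_lt htail)) hC
  linarith
end
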